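/- Let P be an ergodic row-stochastic matrix on a finite set D reversible with respect to a positive probability distribution π, with second largest eigenvalue β₁. For the Markov chain started in π, the worst-case mean squared error over {f : ‖f‖₂ ≤ 1} of S_n(f) = (1/n)∑_{i=1}^n f(X_i) equals (1+β₁)/(n(1−β₁)) − 2β₁(1−β₁^n)/(n²(1−β₁)²), and this is bounded above by 2/(n(1−β₁)). -/
import Mathlib
open Finset Matrix
set_option maxHeartbeats 1000000



noncomputable def geoA (z : ℝ) (k : ℕ) : ℝ := ∑ a ∈ range (k+1), z ^ a
noncomputable def geoS (z : ℝ) (n : ℕ) : ℝ := ∑ d ∈ range n, z ^ (d+1)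
noncomputable def HH (n : ℕ) (z : ℝ) : ℝ := ∑ i ∈ range n, ∑ j ∈ range n, z ^ (Nat.dist i j)

lemma geoA_succ (z : ℝ) (k : ℕ) : geoA z (k+1) = geoA z k + z ^ (k+1) := by
  simp [geoA, Finset.sum_range_succ]

lemma geoA_succ' (z : ℝ) (k : ℕ) : geoA z (k+1) = 1 + z * geoA z k := by
  unfold geoA
  rw [Finset.sum_range_succ', Finset.mul_sum]
  simp [pow_succ, mul_comm, add_comm]

lemma geoA_eq (z : ℝ) (k : ℕ) : geoA z k = 1 + geoS z k := by
  simp [geoA, geoS, Finset.sum_range_succ']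
  ring

lemma geoA_mul (z : ℝ) (k : ℕ) : geoA z k * (z - 1) = z ^ (k+1) - 1 := geom_sum_mul z (k+1)

lemma geoA_nonneg {z : ℝ} (hz : -1 ≤ z) (k : ℕ) : 0 ≤ geoA z k := by
  rcases le_or_gt 0 z with h | h
  · exact Finset.sum_nonneg fun a _ => pow_nonneg h a
  · have key : ∀ m, 0 ≤ geoA z m ∧ geoA z m ≤ 1 := by
      intro m
      induction m with
      | zero => simp [geoA]
      | succ m ih =>
        rw [geoA_succ']
        constructor <;> nlinarith [ih.1, ih.2]
    exact (key k).1

lemma geoS_eq (z : ℝ) (n : ℕ) : (1 - z) * geoS z n = z * (1 - z ^ n) := by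
  induction n with
  | zero => simp [geoS]
  | succ n ih =>
    have h : geoS z (n+1) = geoS z n + z^(n+1) := by simp [geoS, Finset.sum_range_succ]
    rw [h]; ring_nf; ring_nf at ih; nlinarith [ih]

lemma HH_succ (z : ℝ) (n : ℕ) : HH (n+1) z = HH n z + 1 + 2 * geoS z n := by
  have hr : ∀ i < n, Nat.dist i n = n - i := fun i hi => Nat.dist_eq_sub_of_le hi.le
  have h1 : ∑ i ∈ range n, z ^ (Nat.dist i n) = geoS z n := by
    unfold geoS
    rw [← sum_range_reflect (fun d => z ^ (d+1)) n]
    refine Finset.sum_congr rfl fun i hi => ?_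
    rw [hr i (mem_range.mp hi)]
    congr 1
    have := mem_range.mp hi
    omega
  have h2 : ∑ j ∈ range n, z ^ (Nat.dist n j) = geoS z n := by
    rw [← h1]
    exact Finset.sum_congr rfl fun i _ => by rw [Nat.dist_comm]
  simp only [HH, Finset.sum_range_succ]
  rw [Finset.sum_add_distrib, h2, h1]
  simp [Nat.dist_self]
  ring



lemma HH_closed (z : ℝ) (n : ℕ) :
    (1 - z)^2 * HH n z = n * (1 - z^2) - 2 * z * (1 - z^n) := by
  induction n with
  | zero => simp [HH]
  | succ n ih =>
    rw [HH_succ]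
    have hS := geoS_eq z n
    push_cast
    linear_combination ih + 2*(1-z)*hS

lemma Cident (x y : ℝ) (n : ℕ) :
    (y - x) * ∑ k ∈ range n, geoA y k * x ^ (n-1-k) = geoS y n - geoS x n := by
  induction n with
  | zero => simp [geoS]
  | succ n ih =>
    have hs : ∑ k ∈ range (n+1), geoA y k * x ^ (n-k)
        = geoA y n + x * ∑ k ∈ range n, geoA y k * x ^ (n-1-k) := by
      rw [Finset.sum_range_succ]
      simp only [Nat.sub_self, pow_zero, mul_one]
      rw [Finset.mul_sum, add_comm]
      congr 1
      refine Finset.sum_congr rfl fun k hk => ?_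
      have hk' := mem_range.mp hk
      have h : n - k = (n - 1 - k) + 1 := by omega
      rw [h, pow_succ]
      ring
    have hgsy : geoS y (n+1) = geoS y n + y^(n+1) := by simp [geoS, Finset.sum_range_succ]
    have hgsx : geoS x (n+1) = geoS x n + x^(n+1) := by simp [geoS, Finset.sum_range_succ]
    have hy := geoA_mul y n
    have hx := geoA_mul x n
    have hye := geoA_eq y n
    have hxe := geoA_eq x n
    have h0 : (n + 1 - 1 : ℕ) = n := rfl
    rw [h0, hs, hgsy, hgsx]
    linear_combination x*ih + hy - hx + (1-x)*hye - (1-x)*hxe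

lemma HH_mono {x y : ℝ} (hx : -1 ≤ x) (hxy : x ≤ y) (hy : y ≤ 1) (n : ℕ) :
    HH n x ≤ HH n y := by
  have hy1 : -1 ≤ y := le_trans hx hxy
  have key : ∀ m, HH m y - HH m x
      = 2 * (y - x) * ∑ k ∈ range (m-1), geoA y k * geoA x (m-2-k) := by
    intro m
    induction m with
    | zero => simp [HH]
    | succ m ih =>
      rw [HH_succ, HH_succ]
      have hTdiff : ∑ k ∈ range m, geoA y k * geoA x (m-1-k)
          - ∑ k ∈ range (m-1), geoA y k * geoA x (m-2-k)
          = ∑ k ∈ range m, geoA y k * x ^ (m-1-k) := by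
        rcases Nat.eq_zero_or_pos m with rfl | hm
        · simp
        · obtain ⟨m', rfl⟩ : ∃ m', m = m' + 1 := ⟨m - 1, by omega⟩
          rw [Finset.sum_range_succ, Finset.sum_range_succ]
          have hsub : ∑ k ∈ range m', geoA y k * geoA x (m' + 1 - 1 - k)
              - ∑ k ∈ range m', geoA y k * geoA x (m' + 1 - 2 - k)
              = ∑ k ∈ range m', geoA y k * x ^ (m' + 1 - 1 - k) := by
            rw [← Finset.sum_sub_distrib]
            refine Finset.sum_congr rfl fun k hk => ?_
            have hk' := mem_range.mp hk
            have h1 : m' + 1 - 1 - k = (m' - 1 - k) + 1 := by omega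
            have h2 : m' + 1 - 2 - k = m' - 1 - k := by omega
            rw [h1, h2, geoA_succ]
            ring
          have hA0 : geoA x (m' + 1 - 1 - m') = 1 := by
            have : m' + 1 - 1 - m' = 0 := by omega
            simp [this, geoA]
          have hx0 : (x : ℝ) ^ (m' + 1 - 1 - m') = 1 := by
            have : m' + 1 - 1 - m' = 0 := by omega
            simp [this]
          have hsimp : (m' + 1 - 1 : ℕ) = m' := rfl
          rw [hA0, hx0]
          simp only [hsimp] at hsub ⊢
          linarith [hsub]
      have hC := Cident x y m
      have h0 : (m + 1 - 1 : ℕ) = m := rfl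
      rw [h0]
      have h2 : ∀ k ∈ range m, geoA y k * geoA x (m + 1 - 2 - k) = geoA y k * geoA x (m-1-k) :=
        fun k hk => by
          have hkm := mem_range.mp hk
          have h3 : m + 1 - 2 - k = m - 1 - k := by omega
          rw [h3]
      rw [Finset.sum_congr rfl h2]
      linear_combination ih - 2*(y-x)*hTdiff - 2*hC
  have hsum : 0 ≤ ∑ k ∈ range (n-1), geoA y k * geoA x (n-2-k) :=
    Finset.sum_nonneg fun k _ => mul_nonneg (geoA_nonneg hy1 k) (geoA_nonneg hx _)
  nlinarith [key n, hsum, mul_nonneg (sub_nonneg.mpr hxy) hsum]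



section Path
variable {D : Type*} [Fintype D] [DecidableEq D]

/-- path weight `π(ω₀) ∏ P(ωᵢ, ωᵢ₊₁)` -/
noncomputable def pathW (π : D → ℝ) (P : Matrix D D ℝ) (m : ℕ) (ω : Fin (m+1) → D) : ℝ :=
  π (ω 0) * ∏ i : Fin m, P (ω i.castSucc) (ω i.succ)

variable (π : D → ℝ) (P : Matrix D D ℝ)

lemma pathW_snoc (m : ℕ) (ω : Fin (m+1) → D) (y : D) :
    pathW π P (m+1) (Fin.snoc ω y) = pathW π P m ω * P (ω (Fin.last m)) y := by
  unfold pathW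
  rw [Fin.prod_univ_castSucc]
  have h0 : (Fin.snoc ω y : Fin (m+2) → D) 0 = ω 0 := by
    have : (0 : Fin (m+2)) = Fin.castSucc 0 := rfl
    rw [this, Fin.snoc_castSucc]
  have hlast1 : (Fin.last m).castSucc = (Fin.last m : Fin (m+1)).castSucc := rfl
  have hl : (Fin.snoc ω y : Fin (m+2) → D) ((Fin.last m).castSucc) = ω (Fin.last m) :=
    Fin.snoc_castSucc ..
  have hl2 : (Fin.snoc ω y : Fin (m+2) → D) ((Fin.last m).succ) = y := by
    rw [Fin.succ_last, Fin.snoc_last]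
  rw [h0, hl, hl2]
  have hprod : ∀ j : Fin m,
      P ((Fin.snoc ω y : Fin (m+2) → D) (j.castSucc.castSucc))
        ((Fin.snoc ω y : Fin (m+2) → D) (j.castSucc.succ))
      = P (ω j.castSucc) (ω j.succ) := by
    intro j
    rw [Fin.succ_castSucc, Fin.snoc_castSucc, Fin.snoc_castSucc]
  rw [Finset.prod_congr rfl (fun j _ => hprod j)]
  ring

lemma pathW_cons (m : ℕ) (x : D) (ω : Fin (m+1) → D) :
    pathW π P (m+1) (Fin.cons x ω) = π x * P x (ω 0) *
      ∏ i : Fin m, P (ω i.castSucc) (ω i.succ) := by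
  unfold pathW
  rw [Fin.prod_univ_succ]
  have h0 : (Fin.cons x ω : Fin (m+2) → D) 0 = x := Fin.cons_zero ..
  have h1 : (Fin.cons x ω : Fin (m+2) → D) ((0 : Fin (m+1)).succ) = ω 0 := Fin.cons_succ ..
  have h2 : (0 : Fin (m+1)).castSucc = (0 : Fin (m+2)) := rfl
  have hprod : ∀ j : Fin m,
      P ((Fin.cons x ω : Fin (m+2) → D) (j.succ.castSucc))
        ((Fin.cons x ω : Fin (m+2) → D) (j.succ.succ))
      = P (ω j.castSucc) (ω j.succ) := by
    intro j
    rw [← Fin.succ_castSucc, Fin.cons_succ, Fin.cons_succ]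
  rw [Finset.prod_congr rfl (fun j _ => hprod j)]
  rw [h2, h0, h1]
  ring

/-- sum over paths via snoc decomposition -/
lemma pathSum_snoc (m : ℕ) (F : (Fin (m+2) → D) → ℝ) :
    ∑ ω : Fin (m+2) → D, F ω = ∑ ω : Fin (m+1) → D, ∑ y : D, F (Fin.snoc ω y) := by
  have h : ∑ ω : Fin (m+2) → D, F ω
      = ∑ p : D × (Fin (m+1) → D), F (Fin.snoc p.2 p.1) :=
    (Fintype.sum_equiv (Fin.snocEquiv (fun _ => D)) _ _ (fun p => rfl)).symm
  rw [h, Fintype.sum_prod_type, Finset.sum_comm]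

lemma pathSum_cons (m : ℕ) (F : (Fin (m+2) → D) → ℝ) :
    ∑ ω : Fin (m+2) → D, F ω = ∑ x : D, ∑ ω : Fin (m+1) → D, F (Fin.cons x ω) := by
  have h : ∑ ω : Fin (m+2) → D, F ω
      = ∑ p : D × (Fin (m+1) → D), F (Fin.cons p.1 p.2) :=
    (Fintype.sum_equiv (Fin.consEquiv (fun _ => D)) _ _ (fun p => rfl)).symm
  rw [h, Fintype.sum_prod_type]

lemma sum_fin_one (F : (Fin 1 → D) → ℝ) :
    ∑ ω : Fin 1 → D, F ω = ∑ x : D, F (fun _ => x) := by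
  exact Fintype.sum_equiv (Equiv.funUnique (Fin 1) D) _ _ (fun ω => by
    congr 1; ext i; exact congrArg ω (Subsingleton.elim _ _))


lemma marg_tail (hProw : ∀ x, ∑ y, P x y = 1) (m : ℕ) (F : (Fin (m+1) → D) → ℝ) :
    ∑ ω : Fin (m+2) → D, pathW π P (m+1) ω * F (ω ∘ Fin.castSucc)
    = ∑ ω : Fin (m+1) → D, pathW π P m ω * F ω := by
  rw [pathSum_snoc]
  refine Finset.sum_congr rfl fun ω _ => ?_
  have hcomp : ∀ y : D, (Fin.snoc ω y : Fin (m+2) → D) ∘ Fin.castSucc = ω := by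
    intro y; funext i; exact Fin.snoc_castSucc ..
  calc ∑ y : D, pathW π P (m+1) (Fin.snoc ω y) * F ((Fin.snoc ω y : Fin (m+2) → D) ∘ Fin.castSucc)
      = ∑ y : D, pathW π P m ω * F ω * P (ω (Fin.last m)) y := by
        refine Finset.sum_congr rfl fun y _ => ?_
        rw [pathW_snoc, hcomp]
        ring
    _ = pathW π P m ω * F ω := by
        rw [← Finset.mul_sum, hProw, mul_one]

lemma marg_head (hstat : ∀ y, ∑ x, π x * P x y = π y) (m : ℕ) (F : (Fin (m+1) → D) → ℝ) :
    ∑ ω : Fin (m+2) → D, pathW π P (m+1) ω * F (ω ∘ Fin.succ)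
    = ∑ ω : Fin (m+1) → D, pathW π P m ω * F ω := by
  rw [pathSum_cons, Finset.sum_comm]
  refine Finset.sum_congr rfl fun ω _ => ?_
  have hcomp : ∀ x : D, (Fin.cons x ω : Fin (m+2) → D) ∘ Fin.succ = ω := by
    intro x; funext i; exact Fin.cons_succ ..
  calc ∑ x : D, pathW π P (m+1) (Fin.cons x ω) * F ((Fin.cons x ω : Fin (m+2) → D) ∘ Fin.succ)
      = ∑ x : D, (π x * P x (ω 0)) * ((∏ i : Fin m, P (ω i.castSucc) (ω i.succ)) * F ω) := by
        refine Finset.sum_congr rfl fun x _ => ?_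
        rw [pathW_cons, hcomp]
        ring
    _ = pathW π P m ω * F ω := by
        rw [← Finset.sum_mul, hstat]
        unfold pathW
        ring

lemma twopoint_last (m : ℕ) (g h : D → ℝ) :
    ∑ ω : Fin (m+1) → D, pathW π P m ω * (g (ω 0) * h (ω (Fin.last m)))
    = ∑ x, π x * g x * (P ^ m).mulVec h x := by
  induction m generalizing h with
  | zero =>
    rw [sum_fin_one]
    refine Finset.sum_congr rfl fun x _ => ?_
    simp [pathW, Matrix.one_mulVec]
    ring
  | succ m ih =>
    rw [pathSum_snoc]
    have step : ∀ ω : Fin (m+1) → D,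
        ∑ y : D, pathW π P (m+1) (Fin.snoc ω y) *
          (g ((Fin.snoc ω y : Fin (m+2) → D) 0) * h ((Fin.snoc ω y : Fin (m+2) → D) (Fin.last (m+1))))
        = pathW π P m ω * (g (ω 0) * (P.mulVec h) (ω (Fin.last m))) := by
      intro ω
      have h0 : ∀ y, (Fin.snoc ω y : Fin (m+2) → D) 0 = ω 0 := fun y => by
        have : (0 : Fin (m+2)) = Fin.castSucc 0 := rfl
        rw [this, Fin.snoc_castSucc]
      calc ∑ y : D, pathW π P (m+1) (Fin.snoc ω y) *
            (g ((Fin.snoc ω y : Fin (m+2) → D) 0) * h ((Fin.snoc ω y : Fin (m+2) → D) (Fin.last (m+1))))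
          = ∑ y : D, pathW π P m ω * g (ω 0) * (P (ω (Fin.last m)) y * h y) := by
            refine Finset.sum_congr rfl fun y _ => ?_
            rw [pathW_snoc, h0, Fin.snoc_last]
            ring
        _ = pathW π P m ω * (g (ω 0) * (P.mulVec h) (ω (Fin.last m))) := by
            rw [← Finset.mul_sum]
            rw [Matrix.mulVec]
            simp [dotProduct]
            ring
    rw [Finset.sum_congr rfl (fun ω _ => step ω), ih (P.mulVec h)]
    refine Finset.sum_congr rfl fun x _ => ?_
    rw [Matrix.mulVec_mulVec, ← pow_succ]

lemma twopoint_zero (hProw : ∀ x, ∑ y, P x y = 1) :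
    ∀ (m d : ℕ) (hd : d ≤ m) (g h : D → ℝ),
    ∑ ω : Fin (m+1) → D, pathW π P m ω * (g (ω 0) * h (ω ⟨d, by omega⟩))
    = ∑ x, π x * g x * (P ^ d).mulVec h x := by
  intro m
  induction m with
  | zero =>
    intro d hd g h
    obtain rfl : d = 0 := by omega
    exact twopoint_last π P 0 g h
  | succ m ih =>
    intro d hd g h
    rcases Nat.eq_or_lt_of_le hd with heq | hlt
    · subst heq
      have h1 : (⟨m+1, by omega⟩ : Fin (m+2)) = Fin.last (m+1) := rfl
      rw [h1]
      exact twopoint_last π P (m+1) g h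
    · have hd' : d ≤ m := by omega
      have := marg_tail π P hProw m (fun ω => g (ω 0) * h (ω ⟨d, by omega⟩))
      calc ∑ ω : Fin (m+2) → D, pathW π P (m+1) ω * (g (ω 0) * h (ω ⟨d, by omega⟩))
          = ∑ ω : Fin (m+2) → D, pathW π P (m+1) ω *
              ((fun ω' : Fin (m+1) → D => g (ω' 0) * h (ω' ⟨d, by omega⟩)) (ω ∘ Fin.castSucc)) := rfl
        _ = ∑ ω : Fin (m+1) → D, pathW π P m ω * (g (ω 0) * h (ω ⟨d, by omega⟩)) := this
        _ = ∑ x, π x * g x * (P ^ d).mulVec h x := ih d hd' g h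

lemma twopoint_nat (hProw : ∀ x, ∑ y, P x y = 1) (hstat : ∀ y, ∑ x, π x * P x y = π y) :
    ∀ (i m d : ℕ) (hid : i + d ≤ m) (g h : D → ℝ),
    ∑ ω : Fin (m+1) → D, pathW π P m ω * (g (ω ⟨i, by omega⟩) * h (ω ⟨i + d, by omega⟩))
    = ∑ x, π x * g x * (P ^ d).mulVec h x := by
  intro i
  induction i with
  | zero =>
    intro m d hid g h
    have hd0 : (⟨0 + d, by omega⟩ : Fin (m+1)) = ⟨d, by omega⟩ := Fin.ext (Nat.zero_add d)
    have h00 : (⟨0, by omega⟩ : Fin (m+1)) = 0 := Fin.ext (by simp)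
    simp_rw [hd0, h00]
    exact twopoint_zero π P hProw m d (by omega) g h
  | succ i ih =>
    intro m d hid g h
    obtain ⟨m', rfl⟩ : ∃ m', m = m' + 1 := ⟨m - 1, by omega⟩
    have hid' : i + d ≤ m' := by omega
    have := marg_head π P hstat m' (fun ω => g (ω ⟨i, by omega⟩) * h (ω ⟨i + d, by omega⟩))
    calc ∑ ω : Fin (m'+2) → D, pathW π P (m'+1) ω * (g (ω ⟨i+1, by omega⟩) * h (ω ⟨i+1+d, by omega⟩))
        = ∑ ω : Fin (m'+2) → D, pathW π P (m'+1) ω *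
            ((fun ω' : Fin (m'+1) → D => g (ω' ⟨i, by omega⟩) * h (ω' ⟨i + d, by omega⟩)) (ω ∘ Fin.succ)) := by
          refine Finset.sum_congr rfl fun ω _ => ?_
          have e1 : (ω ∘ Fin.succ) (⟨i, by omega⟩ : Fin (m'+1)) = ω ⟨i+1, by omega⟩ := rfl
          have e2 : (ω ∘ Fin.succ) (⟨i+d, by omega⟩ : Fin (m'+1)) = ω ⟨i+1+d, by omega⟩ := by
            show ω (Fin.succ ⟨i+d, _⟩) = ω ⟨i+1+d, _⟩
            congr 1
            exact Fin.ext (by simp [Fin.val_succ]; omega)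
          simp only []
          rw [e1, e2]
      _ = ∑ ω : Fin (m'+1) → D, pathW π P m' ω *
            (g (ω ⟨i, by omega⟩) * h (ω ⟨i + d, by omega⟩)) := this
      _ = ∑ x, π x * g x * (P ^ d).mulVec h x := ih m' d hid' g h

end Path



section Spec
variable {D : Type*} [Fintype D] [DecidableEq D] [Nonempty D]

lemma dual_ortho (π : D → ℝ) (hπpos : ∀ x, 0 < π x)
    (u : Fin (Fintype.card D) → D → ℝ)
    (h_ortho : ∀ k l, ∑ x, u k x * u l x * π x = if k = l then (1 : ℝ) else 0) :
    ∀ y y', ∑ k, u k y * u k y' * π y' = if y = y' then (1 : ℝ) else 0 := by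
  classical
  set e := Fintype.equivFin D with he
  set B : Matrix D D ℝ := Matrix.of fun x y => u (e x) y * Real.sqrt (π y) with hB
  have hBBt : B * Bᵀ = 1 := by
    ext x x'
    simp only [Matrix.mul_apply, Matrix.transpose_apply, hB, Matrix.of_apply]
    have hterm : ∀ y, u (e x) y * Real.sqrt (π y) * (u (e x') y * Real.sqrt (π y))
        = u (e x) y * u (e x') y * π y := by
      intro y
      have hss := Real.mul_self_sqrt (le_of_lt (hπpos y))
      linear_combination (u (e x) y * u (e x') y) * hss
    rw [Finset.sum_congr rfl fun y _ => hterm y, h_ortho]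
    simp [Matrix.one_apply, e.injective.eq_iff]
  have hBtB : Bᵀ * B = 1 := mul_eq_one_comm.mp hBBt
  intro y y'
  have h := congrFun (congrFun hBtB y) y'
  simp only [Matrix.mul_apply, Matrix.transpose_apply, hB, Matrix.of_apply] at h
  have hre : ∑ x : D, u (e x) y * Real.sqrt (π y) * (u (e x) y' * Real.sqrt (π y'))
      = (∑ k, u k y * u k y') * (Real.sqrt (π y) * Real.sqrt (π y')) := by
    rw [Finset.sum_mul]
    exact Fintype.sum_equiv e _ _ (fun x => by ring)
  rw [hre] at h
  by_cases hyy : y = y'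
  · subst hyy
    simp only [Matrix.one_apply_eq] at h
    have hs : Real.sqrt (π y) * Real.sqrt (π y) = π y := Real.mul_self_sqrt (le_of_lt (hπpos y))
    rw [hs] at h
    simp only [if_pos rfl]
    calc ∑ k, u k y * u k y * π y = (∑ k, u k y * u k y) * π y := by rw [Finset.sum_mul]
      _ = 1 := h
  · have h1 : (1 : Matrix D D ℝ) y y' = 0 := Matrix.one_apply_ne hyy
    rw [h1] at h
    have hsp : 0 < Real.sqrt (π y) * Real.sqrt (π y') :=
      mul_pos (Real.sqrt_pos.mpr (hπpos y)) (Real.sqrt_pos.mpr (hπpos y'))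
    have h2 : (∑ k, u k y * u k y') = 0 := by
      rcases mul_eq_zero.mp h with h' | h'
      · exact h'
      · exact absurd h' (ne_of_gt hsp)
    simp only [if_neg hyy]
    calc ∑ k, u k y * u k y' * π y' = (∑ k, u k y * u k y') * π y' := by rw [Finset.sum_mul]
      _ = 0 := by rw [h2, zero_mul]

lemma expand_fn (π : D → ℝ) (hπpos : ∀ x, 0 < π x)
    (u : Fin (Fintype.card D) → D → ℝ)
    (h_ortho : ∀ k l, ∑ x, u k x * u l x * π x = if k = l then (1 : ℝ) else 0)
    (g : D → ℝ) (x : D) :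
    g x = ∑ k, (∑ z, g z * u k z * π z) * u k x := by
  classical
  have hdual := dual_ortho π hπpos u h_ortho
  calc g x = ∑ z, g z * (if x = z then (1:ℝ) else 0) := by simp
    _ = ∑ z, g z * (∑ k, u k x * u k z * π z) := by
        refine Finset.sum_congr rfl fun z _ => ?_
        rw [hdual x z]
    _ = ∑ z, ∑ k, (g z * u k z * π z) * u k x := by
        refine Finset.sum_congr rfl fun z _ => ?_
        rw [Finset.mul_sum]
        exact Finset.sum_congr rfl fun k _ => by ring
    _ = ∑ k, (∑ z, g z * u k z * π z) * u k x := by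
        rw [Finset.sum_comm]
        exact Finset.sum_congr rfl fun k _ => by rw [Finset.sum_mul]
end Spec
section Master
variable {D : Type*} [Fintype D] [DecidableEq D] [Nonempty D]

lemma pow_eig (P : Matrix D D ℝ) (u : D → ℝ) (β : ℝ) (h : P.mulVec u = β • u) (d : ℕ) :
    (P ^ d).mulVec u = (β ^ d) • u := by
  induction d with
  | zero => simp [Matrix.one_mulVec]
  | succ d ih =>
    rw [pow_succ, ← Matrix.mulVec_mulVec, h, Matrix.mulVec_smul, ih, smul_smul, pow_succ, mul_comm]

lemma Cval (π : D → ℝ) (hπpos : ∀ x, 0 < π x) (P : Matrix D D ℝ)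
    (u : Fin (Fintype.card D) → D → ℝ) (βs : Fin (Fintype.card D) → ℝ)
    (h_eig : ∀ k, P.mulVec (u k) = βs k • u k)
    (h_ortho : ∀ k l, ∑ x, u k x * u l x * π x = if k = l then (1 : ℝ) else 0)
    (g : D → ℝ) (d : ℕ) :
    ∑ x, π x * g x * (P ^ d).mulVec g x
    = ∑ k, (∑ z, g z * u k z * π z)^2 * βs k ^ d := by
  classical
  set a : Fin (Fintype.card D) → ℝ := fun k => ∑ z, g z * u k z * π z with ha
  have hmv : ∀ x, (P ^ d).mulVec g x = ∑ k, a k * (βs k ^ d * u k x) := by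
    intro x
    have hg : g = fun z => ∑ k, a k * u k z := funext fun z => expand_fn π hπpos u h_ortho g z
    calc (P ^ d).mulVec g x = ∑ y, (P ^ d) x y * g y := by
          simp [Matrix.mulVec, dotProduct]
      _ = ∑ y, ∑ k, a k * ((P ^ d) x y * u k y) := by
          refine Finset.sum_congr rfl fun y _ => ?_
          rw [show g y = ∑ k, a k * u k y from congrFun hg y, Finset.mul_sum]
          exact Finset.sum_congr rfl fun k _ => by ring
      _ = ∑ k, a k * ∑ y, (P ^ d) x y * u k y := by
          rw [Finset.sum_comm]
          exact Finset.sum_congr rfl fun k _ => by rw [Finset.mul_sum]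
      _ = ∑ k, a k * (βs k ^ d * u k x) := by
          refine Finset.sum_congr rfl fun k _ => ?_
          congr 1
          have := congrFun (pow_eig P (u k) (βs k) (h_eig k) d) x
          simpa [Matrix.mulVec, dotProduct] using this
  calc ∑ x, π x * g x * (P ^ d).mulVec g x
      = ∑ x, ∑ k, (g x * u k x * π x) * (a k * βs k ^ d) := by
        refine Finset.sum_congr rfl fun x _ => ?_
        rw [hmv x, Finset.mul_sum]
        exact Finset.sum_congr rfl fun k _ => by ring
    _ = ∑ k, (∑ x, g x * u k x * π x) * (a k * βs k ^ d) := by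
        rw [Finset.sum_comm]
        exact Finset.sum_congr rfl fun k _ => (Finset.sum_mul _ _ _).symm
    _ = ∑ k, a k ^2 * βs k ^ d := by
        refine Finset.sum_congr rfl fun k _ => ?_
        show a k * (a k * βs k ^ d) = a k ^ 2 * βs k ^ d
        ring

lemma parseval (π : D → ℝ) (hπpos : ∀ x, 0 < π x)
    (u : Fin (Fintype.card D) → D → ℝ)
    (h_ortho : ∀ k l, ∑ x, u k x * u l x * π x = if k = l then (1 : ℝ) else 0)
    (g : D → ℝ) :
    ∑ x, g x ^ 2 * π x = ∑ k, (∑ z, g z * u k z * π z)^2 := by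
  classical
  set a : Fin (Fintype.card D) → ℝ := fun k => ∑ z, g z * u k z * π z with ha
  calc ∑ x, g x ^ 2 * π x = ∑ x, ∑ k, (g x * u k x * π x) * a k := by
        refine Finset.sum_congr rfl fun x _ => ?_
        have hx : g x = ∑ k, a k * u k x := expand_fn π hπpos u h_ortho g x
        calc g x ^ 2 * π x = (∑ k, a k * u k x) * (g x * π x) := by rw [← hx]; ring
          _ = ∑ k, (g x * u k x * π x) * a k := by
              rw [Finset.sum_mul]
              exact Finset.sum_congr rfl fun k _ => by ring
    _ = ∑ k, a k ^ 2 := by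
        rw [Finset.sum_comm]
        refine Finset.sum_congr rfl fun k _ => ?_
        rw [← Finset.sum_mul]
        show a k * a k = a k ^ 2
        ring
end Master
section Master2
variable {D : Type*} [Fintype D] [DecidableEq D] [Nonempty D]

lemma Eval (π : D → ℝ) (hπpos : ∀ x, 0 < π x) (P : Matrix D D ℝ)
    (hProw : ∀ x, ∑ y, P x y = 1) (hstat : ∀ y, ∑ x, π x * P x y = π y)
    (u : Fin (Fintype.card D) → D → ℝ) (βs : Fin (Fintype.card D) → ℝ)
    (h_eig : ∀ k, P.mulVec (u k) = βs k • u k)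
    (h_ortho : ∀ k l, ∑ x, u k x * u l x * π x = if k = l then (1 : ℝ) else 0)
    (m : ℕ) (f : D → ℝ) :
    ∑ ω : Fin (m+1) → D, pathW π P m ω *
      ((1 / ((m+1 : ℕ) : ℝ)) * (∑ i, f (ω i)) - ∑ x, f x * π x) ^ 2
    = ∑ k, (∑ z, (f z - ∑ x, f x * π x) * u k z * π z)^2 * HH (m+1) (βs k)
        / ((m+1 : ℕ) : ℝ)^2 := by
  classical
  set Sf : ℝ := ∑ x, f x * π x with hSf
  set g : D → ℝ := fun x => f x - Sf with hg
  set a : Fin (Fintype.card D) → ℝ := fun k => ∑ z, g z * u k z * π z with ha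
  have hnn0 : ((m+1 : ℕ) : ℝ) ≠ 0 := by positivity
  -- step 1: rewrite the square
  have hsq : ∀ ω : Fin (m+1) → D,
      ((1 / ((m+1 : ℕ) : ℝ)) * (∑ i, f (ω i)) - Sf) ^ 2
      = (1 / ((m+1 : ℕ) : ℝ)^2) * ∑ i : Fin (m+1), ∑ j : Fin (m+1), g (ω i) * g (ω j) := by
    intro ω
    have h1 : ∑ i : Fin (m+1), g (ω i) = (∑ i, f (ω i)) - ((m+1 : ℕ) : ℝ) * Sf := by
      rw [hg]
      rw [Finset.sum_sub_distrib]
      congr 1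
      rw [Finset.sum_const]
      simp
    have h2 : (1 / ((m+1 : ℕ) : ℝ)) * (∑ i, f (ω i)) - Sf
        = (1 / ((m+1 : ℕ) : ℝ)) * ∑ i : Fin (m+1), g (ω i) := by
      rw [h1]
      field_simp
    rw [h2, mul_pow, sq (∑ i : Fin (m+1), g (ω i)), Finset.sum_mul_sum]
    ring
  -- step 2: swap sums
  have hswap : ∑ ω : Fin (m+1) → D, pathW π P m ω *
        ((1 / ((m+1 : ℕ) : ℝ)) * (∑ i, f (ω i)) - Sf) ^ 2
      = (1 / ((m+1 : ℕ) : ℝ)^2) * ∑ i : Fin (m+1), ∑ j : Fin (m+1),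
          ∑ ω : Fin (m+1) → D, pathW π P m ω * (g (ω i) * g (ω j)) := by
    calc ∑ ω : Fin (m+1) → D, pathW π P m ω *
          ((1 / ((m+1 : ℕ) : ℝ)) * (∑ i, f (ω i)) - Sf) ^ 2
        = ∑ ω : Fin (m+1) → D, ∑ i : Fin (m+1), ∑ j : Fin (m+1),
            (1 / ((m+1 : ℕ) : ℝ)^2) * (pathW π P m ω * (g (ω i) * g (ω j))) := by
          refine Finset.sum_congr rfl fun ω _ => ?_
          rw [hsq ω, ← mul_assoc, Finset.mul_sum]
          refine Finset.sum_congr rfl fun i _ => ?_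
          rw [Finset.mul_sum]
          exact Finset.sum_congr rfl fun j _ => by ring
      _ = ∑ i : Fin (m+1), ∑ ω : Fin (m+1) → D, ∑ j : Fin (m+1),
            (1 / ((m+1 : ℕ) : ℝ)^2) * (pathW π P m ω * (g (ω i) * g (ω j))) := Finset.sum_comm
      _ = ∑ i : Fin (m+1), ∑ j : Fin (m+1), ∑ ω : Fin (m+1) → D,
            (1 / ((m+1 : ℕ) : ℝ)^2) * (pathW π P m ω * (g (ω i) * g (ω j))) :=
          Finset.sum_congr rfl fun i _ => Finset.sum_comm
      _ = (1 / ((m+1 : ℕ) : ℝ)^2) * ∑ i : Fin (m+1), ∑ j : Fin (m+1),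
            ∑ ω : Fin (m+1) → D, pathW π P m ω * (g (ω i) * g (ω j)) := by
          rw [Finset.mul_sum]
          refine Finset.sum_congr rfl fun i _ => ?_
          rw [Finset.mul_sum]
          refine Finset.sum_congr rfl fun j _ => ?_
          rw [Finset.mul_sum]
  -- step 3: two-point evaluation
  have hT : ∀ i j : Fin (m+1), (i : ℕ) ≤ (j : ℕ) →
      ∑ ω : Fin (m+1) → D, pathW π P m ω * (g (ω i) * g (ω j))
      = ∑ k, a k ^ 2 * βs k ^ (Nat.dist i j) := by
    intro i j hij
    have hid : (i : ℕ) + ((j : ℕ) - (i : ℕ)) ≤ m := by omega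
    have h2p := twopoint_nat π P hProw hstat (i : ℕ) m ((j : ℕ) - (i : ℕ)) hid g g
    have ei : (⟨(i : ℕ), by omega⟩ : Fin (m+1)) = i := Fin.ext rfl
    have ej : (⟨(i : ℕ) + ((j : ℕ) - (i : ℕ)), by omega⟩ : Fin (m+1)) = j := Fin.ext (by simp; omega)
    rw [ei, ej] at h2p
    rw [h2p, Cval π hπpos P u βs h_eig h_ortho g _, Nat.dist_eq_sub_of_le hij]
  have hT' : ∀ i j : Fin (m+1),
      ∑ ω : Fin (m+1) → D, pathW π P m ω * (g (ω i) * g (ω j))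
      = ∑ k, a k ^ 2 * βs k ^ (Nat.dist i j) := by
    intro i j
    rcases le_total (i : ℕ) (j : ℕ) with h | h
    · exact hT i j h
    · rw [Finset.sum_congr rfl fun ω _ => by rw [mul_comm (g (ω i)) (g (ω j))], hT j i h,
        Nat.dist_comm]
  -- step 4: assemble
  rw [hswap]
  rw [Finset.sum_congr rfl fun i _ => Finset.sum_congr rfl fun j _ => hT' i j]
  have hfin : ∀ β : ℝ, ∑ i : Fin (m+1), ∑ j : Fin (m+1), β ^ (Nat.dist i j) = HH (m+1) β := by
    intro β
    unfold HH
    rw [← Fin.sum_univ_eq_sum_range (fun i => ∑ j ∈ range (m+1), β ^ (Nat.dist i j)) (m+1)]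
    exact Finset.sum_congr rfl fun i _ =>
      Fin.sum_univ_eq_sum_range (fun j => β ^ (Nat.dist (i : ℕ) j)) (m+1)
  calc (1 / ((m+1 : ℕ) : ℝ)^2) * ∑ i : Fin (m+1), ∑ j : Fin (m+1), ∑ k, a k ^ 2 * βs k ^ (Nat.dist i j)
      = (1 / ((m+1 : ℕ) : ℝ)^2) * ∑ k, a k ^ 2 * ∑ i : Fin (m+1), ∑ j : Fin (m+1), βs k ^ (Nat.dist i j) := by
        congr 1
        calc ∑ i : Fin (m+1), ∑ j : Fin (m+1), ∑ k, a k ^ 2 * βs k ^ (Nat.dist i j)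
            = ∑ i : Fin (m+1), ∑ k, ∑ j : Fin (m+1), a k ^ 2 * βs k ^ (Nat.dist i j) :=
              Finset.sum_congr rfl fun i _ => Finset.sum_comm
          _ = ∑ k, ∑ i : Fin (m+1), ∑ j : Fin (m+1), a k ^ 2 * βs k ^ (Nat.dist i j) :=
              Finset.sum_comm
          _ = ∑ k, a k ^ 2 * ∑ i : Fin (m+1), ∑ j : Fin (m+1), βs k ^ (Nat.dist i j) := by
              refine Finset.sum_congr rfl fun k _ => ?_
              rw [Finset.mul_sum]
              refine Finset.sum_congr rfl fun i _ => ?_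
              rw [Finset.mul_sum]
    _ = ∑ k, a k ^ 2 * HH (m+1) (βs k) / ((m+1 : ℕ) : ℝ)^2 := by
        rw [Finset.mul_sum]
        exact Finset.sum_congr rfl fun k _ => by rw [hfin (βs k)]; ring
end Master2
/-- The weighted `l₂(D,π)` norm. -/
noncomputable def norm2 {D : Type*} [Fintype D] (π : D → ℝ) (f : D → ℝ) : ℝ :=
  Real.sqrt (∑ x, f x ^ 2 * π x)

theorem stmt_17 {D : Type*} [Fintype D] [Nonempty D] [DecidableEq D]
    (π : D → ℝ) (hπpos : ∀ x, 0 < π x) (hπsum : ∑ x, π x = 1)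
    (P : Matrix D D ℝ) (hPnonneg : ∀ x y, 0 ≤ P x y)
    (hProw : ∀ x, ∑ y, P x y = 1)
    (hrev : ∀ x y, π x * P x y = π y * P y x)
    (hcard : 1 < Fintype.card D)
    -- orthonormal eigen-decomposition with eigenvalues in decreasing order,
    -- `β₀ = 1 > β₁ ≥ ... > −1`
    (u : Fin (Fintype.card D) → D → ℝ) (βs : Fin (Fintype.card D) → ℝ)
    (h_eig : ∀ k, P.mulVec (u k) = βs k • u k)
    (h_ortho : ∀ k l, ∑ x, u k x * u l x * π x = if k = l then (1 : ℝ) else 0)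
    (h_anti : Antitone βs)
    (h_b0 : ∀ k : Fin (Fintype.card D), (k : ℕ) = 0 → βs k = 1)
    (h_u0 : ∀ k : Fin (Fintype.card D), (k : ℕ) = 0 → u k = fun _ => 1)
    (h_erg : ∀ k : Fin (Fintype.card D), (k : ℕ) ≠ 0 → |βs k| < 1)
    (n : ℕ) (hn : 0 < n) :
    -- the worst-case mean squared error over the unit ball of l₂(D,π), for the
    -- chain started in the stationary distribution π
    sSup {e : ℝ | ∃ f : D → ℝ, norm2 π f ≤ 1 ∧
        e = ∑ ω : Fin n → D,
              (π (ω ⟨0, hn⟩) *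
                ∏ i : Fin (n - 1),
                  P (ω (Fin.cast (Nat.succ_pred_eq_of_pos hn) i.castSucc))
                    (ω (Fin.cast (Nat.succ_pred_eq_of_pos hn) i.succ))) *
              ((1 / (n : ℝ)) * (∑ i, f (ω i)) - ∑ x, f x * π x) ^ 2}
      = (1 + βs ⟨1, hcard⟩) / ((n : ℝ) * (1 - βs ⟨1, hcard⟩))
          - 2 * βs ⟨1, hcard⟩ * (1 - βs ⟨1, hcard⟩ ^ n)
              / ((n : ℝ) ^ 2 * (1 - βs ⟨1, hcard⟩) ^ 2)
    ∧ (1 + βs ⟨1, hcard⟩) / ((n : ℝ) * (1 - βs ⟨1, hcard⟩))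
          - 2 * βs ⟨1, hcard⟩ * (1 - βs ⟨1, hcard⟩ ^ n)
              / ((n : ℝ) ^ 2 * (1 - βs ⟨1, hcard⟩) ^ 2)
        ≤ 2 / ((n : ℝ) * (1 - βs ⟨1, hcard⟩)) := by
  classical
  obtain ⟨m, rfl⟩ : ∃ m, n = m + 1 := ⟨n - 1, (Nat.succ_pred_eq_of_pos hn).symm⟩
  set k1 : Fin (Fintype.card D) := ⟨1, hcard⟩ with hk1
  set β : ℝ := βs k1 with hβ
  set N : ℝ := ((m + 1 : ℕ) : ℝ) with hN
  have hN1 : (1 : ℝ) ≤ N := by rw [hN]; exact_mod_cast Nat.succ_le_succ (Nat.zero_le m)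
  have hN0 : N ≠ 0 := by positivity
  have hβlt : |β| < 1 := h_erg k1 (by simp [hk1])
  have hβ1 : β < 1 := (abs_lt.mp hβlt).2
  have hβm1 : -1 < β := (abs_lt.mp hβlt).1
  have h1β : (1 : ℝ) - β ≠ 0 := by linarith
  have hstat : ∀ y, ∑ x, π x * P x y = π y := by
    intro y
    calc ∑ x, π x * P x y = ∑ x, π y * P y x := Finset.sum_congr rfl fun x _ => hrev x y
      _ = π y * ∑ x, P y x := by rw [Finset.mul_sum]
      _ = π y := by rw [hProw, mul_one]
  -- weight conversion
  have hW : ∀ ω : Fin (m+1) → D,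
      (π (ω ⟨0, hn⟩) *
        ∏ i : Fin (m + 1 - 1),
          P (ω (Fin.cast (Nat.succ_pred_eq_of_pos hn) i.castSucc))
            (ω (Fin.cast (Nat.succ_pred_eq_of_pos hn) i.succ)))
      = pathW π P m ω := by
    intro ω
    have hp : (∏ i : Fin m,
          P (ω (Fin.cast (Nat.succ_pred_eq_of_pos hn) i.castSucc))
            (ω (Fin.cast (Nat.succ_pred_eq_of_pos hn) i.succ)))
        = ∏ i : Fin m, P (ω i.castSucc) (ω i.succ) := by
      refine Finset.prod_congr rfl fun i _ => ?_
      congr 1 <;> exact congrArg ω (Fin.ext (by simp))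
    have h0 : (⟨0, hn⟩ : Fin (m+1)) = 0 := Fin.ext (by simp)
    unfold pathW
    rw [h0]
    exact congrArg (fun t => π (ω 0) * t) hp
  -- the expectation functional
  have hEval : ∀ f : D → ℝ,
      (∑ ω : Fin (m+1) → D,
        (π (ω ⟨0, hn⟩) *
          ∏ i : Fin (m + 1 - 1),
            P (ω (Fin.cast (Nat.succ_pred_eq_of_pos hn) i.castSucc))
              (ω (Fin.cast (Nat.succ_pred_eq_of_pos hn) i.succ))) *
        ((1 / N) * (∑ i, f (ω i)) - ∑ x, f x * π x) ^ 2)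
      = ∑ k, (∑ z, (f z - ∑ x, f x * π x) * u k z * π z)^2 * HH (m+1) (βs k)
          / N^2 := by
    intro f
    simp only [hN]
    rw [Finset.sum_congr rfl fun ω _ => by rw [hW ω]]
    exact Eval π hπpos P hProw hstat u βs h_eig h_ortho m f
  -- u₁ facts
  have hu1S : ∑ x, u k1 x * π x = 0 := by
    have k0 : Fin (Fintype.card D) := ⟨0, by omega⟩
    have h := h_ortho k1 ⟨0, by omega⟩
    rw [h_u0 ⟨0, by omega⟩ rfl] at h
    have hne : k1 ≠ (⟨0, by omega⟩ : Fin (Fintype.card D)) := by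
      intro hh
      have := congrArg Fin.val hh
      simp [hk1] at this
    rw [if_neg hne] at h
    calc ∑ x, u k1 x * π x = ∑ x, u k1 x * (fun _ => (1:ℝ)) x * π x := by
          refine Finset.sum_congr rfl fun x _ => ?_; simp
      _ = 0 := h
  have hu1a : ∀ k, (∑ z, (u k1 z - ∑ x, u k1 x * π x) * u k z * π z)
      = if k1 = k then (1:ℝ) else 0 := by
    intro k
    rw [hu1S]
    simp only [sub_zero]
    exact h_ortho k1 k
  -- value at u₁
  have hEu1 : (∑ k, (∑ z, (u k1 z - ∑ x, u k1 x * π x) * u k z * π z)^2 * HH (m+1) (βs k)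
          / N^2) = HH (m+1) β / N^2 := by
    rw [Finset.sum_congr rfl fun k _ => by rw [hu1a k]]
    have hite : ∀ k, ((if k1 = k then (1:ℝ) else 0))^2 * HH (m+1) (βs k) / N^2
        = if k1 = k then HH (m+1) (βs k) / N^2 else 0 := by
      intro k
      split_ifs <;> simp
    rw [Finset.sum_congr rfl fun k _ => hite k, Finset.sum_ite_eq]
    simp [hβ]
  -- nonnegativity of each expectation value
  have hpathW_nonneg : ∀ ω : Fin (m+1) → D, 0 ≤ pathW π P m ω := by
    intro ω
    exact mul_nonneg (le_of_lt (hπpos _)) (Finset.prod_nonneg fun i _ => hPnonneg _ _)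
  have hHpos : 0 ≤ HH (m+1) β / N^2 := by
    rw [← hEu1, ← hEval (u k1)]
    refine Finset.sum_nonneg fun ω _ => ?_
    rw [hW ω]
    exact mul_nonneg (hpathW_nonneg ω) (sq_nonneg _)
  have hHpos' : 0 ≤ HH (m+1) β := by
    have : HH (m+1) β = (HH (m+1) β / N^2) * N^2 := by field_simp
    rw [this]
    positivity
  -- the closed form
  have hM : HH (m+1) β / N^2
      = (1 + β) / (N * (1 - β)) - 2 * β * (1 - β ^ (m+1)) / (N^2 * (1 - β)^2) := by
    have hc := HH_closed β (m+1)
    have e1 : HH (m+1) β = (N*(1-β^2) - 2*β*(1-β^(m+1)))/(1-β)^2 := by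
      rw [eq_div_iff (by positivity)]
      linear_combination hc - (1-β^2)*hN
    rw [e1]
    field_simp
    ring
  -- Parseval bound
  have hparse : ∀ f : D → ℝ, norm2 π f ≤ 1 →
      ∑ k, (∑ z, (f z - ∑ x, f x * π x) * u k z * π z)^2 ≤ 1 := by
    intro f hf
    have hp := parseval π hπpos u h_ortho (fun x => f x - ∑ x, f x * π x)
    have h1 : ∑ x, (f x - ∑ x, f x * π x) ^ 2 * π x
        = ∑ x, f x^2 * π x - (∑ x, f x * π x)^2 := by
      have hterm : ∀ x, (f x - ∑ x, f x * π x) ^2 * π x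
          = f x^2 * π x - 2*(∑ x, f x * π x)*(f x * π x) + (∑ x, f x * π x)^2 * π x :=
        fun x => by ring
      rw [Finset.sum_congr rfl fun x _ => hterm x]
      rw [Finset.sum_add_distrib, Finset.sum_sub_distrib, ← Finset.mul_sum, ← Finset.mul_sum,
        hπsum]
      ring
    have h2 : ∑ x, f x^2 * π x ≤ 1 := by
      have hs : 0 ≤ ∑ x, f x^2 * π x :=
        Finset.sum_nonneg fun x _ => mul_nonneg (sq_nonneg _) (hπpos x).le
      have hsq := Real.sq_sqrt hs
      have h3 : Real.sqrt (∑ x, f x^2 * π x) ≤ 1 := hf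
      nlinarith [Real.sqrt_nonneg (∑ x, f x^2 * π x)]
    rw [← hp]
    nlinarith [sq_nonneg (∑ x, f x * π x), h1, h2]
  -- upper bound
  have hub : ∀ f : D → ℝ, norm2 π f ≤ 1 →
      ∑ k, (∑ z, (f z - ∑ x, f x * π x) * u k z * π z)^2 * HH (m+1) (βs k) / N^2
      ≤ HH (m+1) β / N^2 := by
    intro f hf
    have hterm : ∀ k : Fin (Fintype.card D),
        (∑ z, (f z - ∑ x, f x * π x) * u k z * π z)^2 * HH (m+1) (βs k) / N^2
        ≤ (∑ z, (f z - ∑ x, f x * π x) * u k z * π z)^2 * HH (m+1) β / N^2 := by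
      intro k
      rcases Nat.eq_zero_or_pos (k : ℕ) with hk0 | hkpos
      · have hak : (∑ z, (f z - ∑ x, f x * π x) * u k z * π z) = 0 := by
          rw [h_u0 k hk0]
          have : ∀ z, (f z - ∑ x, f x * π x) * (fun _ => (1:ℝ)) z * π z
              = f z * π z - (∑ x, f x * π x) * π z := fun z => by simp; ring
          rw [Finset.sum_congr rfl fun z _ => this z, Finset.sum_sub_distrib, ← Finset.mul_sum,
            hπsum]
          ring
        rw [hak]
        simp
      · have hk1le : k1 ≤ k := by
          rw [hk1]
          exact Fin.mk_le_of_le_val hkpos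
        have hkβ : βs k ≤ β := h_anti hk1le
        have hkm : -1 ≤ βs k := (abs_lt.mp (h_erg k (by omega))).1.le
        have hmono := HH_mono hkm hkβ hβ1.le (m+1)
        have h2 : (∑ z, (f z - ∑ x, f x * π x) * u k z * π z)^2 * HH (m+1) (βs k)
            ≤ (∑ z, (f z - ∑ x, f x * π x) * u k z * π z)^2 * HH (m+1) β :=
          mul_le_mul_of_nonneg_left hmono (sq_nonneg _)
        have hN2 : (0:ℝ) < N^2 := by positivity
        gcongr
    calc ∑ k, (∑ z, (f z - ∑ x, f x * π x) * u k z * π z)^2 * HH (m+1) (βs k) / N^2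
        ≤ ∑ k, (∑ z, (f z - ∑ x, f x * π x) * u k z * π z)^2 * HH (m+1) β / N^2 :=
          Finset.sum_le_sum fun k _ => hterm k
      _ = (∑ k, (∑ z, (f z - ∑ x, f x * π x) * u k z * π z)^2) * (HH (m+1) β / N^2) := by
          rw [Finset.sum_mul]
          exact Finset.sum_congr rfl fun k _ => by ring
      _ ≤ 1 * (HH (m+1) β / N^2) := mul_le_mul_of_nonneg_right (hparse f hf) hHpos
      _ = HH (m+1) β / N^2 := one_mul _
  -- norm of u₁
  have hnorm1 : norm2 π (u k1) ≤ 1 := by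
    have h := h_ortho k1 k1
    rw [if_pos rfl] at h
    have heq : ∑ x, u k1 x ^ 2 * π x = 1 := by
      rw [← h]
      exact Finset.sum_congr rfl fun x _ => by ring
    unfold norm2
    rw [heq, Real.sqrt_one]
  -- IsGreatest
  have hgreat : IsGreatest {e : ℝ | ∃ f : D → ℝ, norm2 π f ≤ 1 ∧
      e = ∑ ω : Fin (m+1) → D,
            (π (ω ⟨0, hn⟩) *
              ∏ i : Fin (m + 1 - 1),
                P (ω (Fin.cast (Nat.succ_pred_eq_of_pos hn) i.castSucc))
                  (ω (Fin.cast (Nat.succ_pred_eq_of_pos hn) i.succ))) *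
            ((1 / N) * (∑ i, f (ω i)) - ∑ x, f x * π x) ^ 2}
      (HH (m+1) β / N^2) := by
    constructor
    · exact ⟨u k1, hnorm1, by rw [hEval (u k1), hEu1]⟩
    · rintro e ⟨f, hf, rfl⟩
      rw [hEval f]
      exact hub f hf
  have hsup := hgreat.csSup_eq
  constructor
  · exact hsup.trans hM
  · -- final inequality
    have habs : |β ^ (m+1)| ≤ 1 := by
      rw [abs_pow]
      exact pow_le_one₀ (abs_nonneg β) hβlt.le
    have hc1 : β ^ (m+1) ≤ 1 := (abs_le.mp habs).2
    have hc2 : -1 ≤ β ^ (m+1) := (abs_le.mp habs).1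
    have hkey : 0 ≤ N*(1-β)^2 + 2*β*(1-β^(m+1)) := by
      nlinarith [mul_nonneg (by linarith : (0:ℝ) ≤ N - 1) (sq_nonneg (1-β)),
        sq_nonneg (β - β^(m+1))]
    have hdiff : 2/(N*(1-β)) - ((1+β)/(N*(1-β)) - 2*β*(1-β^(m+1))/(N^2*(1-β)^2))
        = (N*(1-β)^2 + 2*β*(1-β^(m+1)))/(N^2*(1-β)^2) := by
      field_simp
      ring
    have hpos : 0 ≤ (N*(1-β)^2 + 2*β*(1-β^(m+1)))/(N^2*(1-β)^2) :=
      div_nonneg hkey (by positivity)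
    linarith [hdiff, hpos]
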